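/- Let H = Σ_X Σ_μ J_X^μ ⊗_{j∈X} σ_j^{μ_j} be a Hamiltonian on a spin chain of even length N with J_X^μ = 0 whenever D(X) ≥ N/4, and let |EAP⟩ be an entangled antipodal pair state with signs ω_j^μ. If |EAP⟩ is an eigenvector of H, then its eigenvalue is 0. -/

import Mathlib

open Matrix Finset
open scoped Kronecker

noncomputable section

/-- Pauli X. -/
def σx : Matrix (Fin 2) (Fin 2) ℂ := !![0, 1; 1, 0]
/-- Pauli Y. -/
def σy : Matrix (Fin 2) (Fin 2) ℂ := !![0, -Complex.I; Complex.I, 0]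
/-- Pauli Z. -/
def σz : Matrix (Fin 2) (Fin 2) ℂ := !![1, 0; 0, -1]

/-- Pauli matrices indexed by `0 = x`, `1 = y`, `2 = z`. -/
def pauli : Fin 3 → Matrix (Fin 2) (Fin 2) ℂ := ![σx, σy, σz]

/-- The Bell state `|Φ_{pq}⟩ = (|0⟩|p⟩ + (-1)^q |1⟩|p̄⟩)/√2` on two qubits. -/
def bell (p q : Fin 2) : Fin 2 × Fin 2 → ℂ := fun ab =>
  ((if ab = (0, p) then 1 else 0) +
    (if ab = (1, p + 1) then ((-1 : ℂ)) ^ (q : ℕ) else 0)) / (Real.sqrt 2 : ℂ)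

/-- Signs `ω^x = (-1)^q`, `ω^y = -ω^x ω^z`, `ω^z = (-1)^p`, indexed by `0 = x`, `1 = y`, `2 = z`. -/
def omegaSign (p q : Fin 2) : Fin 3 → ℂ :=
  ![((-1 : ℂ)) ^ (q : ℕ), -(((-1 : ℂ)) ^ (q : ℕ) * ((-1 : ℂ)) ^ (p : ℕ)),
    ((-1 : ℂ)) ^ (p : ℕ)]

/-- Spin configurations of the cyclic chain `Λ = ℤ/N`. -/
abbrev Cfg (N : ℕ) := ZMod N → Fin 2

/-- The single-site operator `σ_j^A` (acting as `A` on site `j` and identity elsewhere). -/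
def pauliAt (N : ℕ) [NeZero N] (j : ZMod N) (A : Matrix (Fin 2) (Fin 2) ℂ) :
    Matrix (Cfg N) (Cfg N) ℂ :=
  Matrix.of fun c c' => if ∀ i, i ≠ j → c i = c' i then A (c j) (c' j) else 0

/-- The Pauli string `⊗_{j∈X} σ_j^{μ_j}`. -/
def pauliString (N : ℕ) [NeZero N] (X : Finset (ZMod N)) (μ : ZMod N → Fin 3) :
    Matrix (Cfg N) (Cfg N) ℂ :=
  Matrix.of fun c c' =>
    (∏ j ∈ X, pauli (μ j) (c j) (c' j)) * (if ∀ i, i ∉ X → c i = c' i then 1 else 0)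

/-- The entangled antipodal pair state `⊗_{j=0}^{M-1} |Φ_{p_j q_j}⟩_{j, j+M}` on a chain
of length `N = 2M`, as an amplitude function on configurations. -/
def eapState (N M : ℕ) [NeZero N] (p q : ZMod N → Fin 2) : Cfg N → ℂ :=
  fun c => ∏ j ∈ Finset.range M,
    bell (p (j : ZMod N)) (q (j : ZMod N)) (c (j : ZMod N), c ((j : ZMod N) + (M : ZMod N)))

/-- Diameter of a subset of the cycle `ℤ/N` (maximal cyclic distance between two points). -/
def diam (N : ℕ) [NeZero N] (X : Finset (ZMod N)) : ℕ :=
  X.sup fun a => X.sup fun b => min (a - b).val (b - a).val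

/-- A Hamiltonian expanded in the Pauli string basis,
`H = Σ_X Σ_μ J_X^μ ⊗_{j∈X} σ_j^{μ_j}`, with real coefficients `J`. -/
def ham (N : ℕ) [NeZero N] (J : Finset (ZMod N) → (ZMod N → Fin 3) → ℝ) :
    Matrix (Cfg N) (Cfg N) ℂ :=
  ∑ X : Finset (ZMod N), ∑ μ : ZMod N → Fin 3, (J X μ : ℂ) • pauliString N X μ


namespace EAPProof

/-- The per-pair quantity `⟨Φ_pq| A ⊗ B |Φ_pq⟩` written as an explicit double sum. -/
def pairSum (pp qq : Fin 2) (A B : Matrix (Fin 2) (Fin 2) ℂ) : ℂ :=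
  ∑ t : Fin 2 × Fin 2, ∑ t' : Fin 2 × Fin 2,
    (starRingEnd ℂ) (bell pp qq t) * (A t.1 t'.1 * B t.2 t'.2) * bell pp qq t'

lemma sqrt2_sq : (Real.sqrt 2 : ℂ) * (Real.sqrt 2 : ℂ) = 2 := by
  rw [← Complex.ofReal_mul, Real.mul_self_sqrt (by norm_num)]; norm_num

lemma pairSum_one_one (pp qq : Fin 2) : pairSum pp qq 1 1 = 1 := by
  fin_cases pp <;> fin_cases qq <;>
    simp [pairSum, bell, Fintype.sum_prod_type, Fin.sum_univ_two, Matrix.one_apply,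
      Prod.ext_iff, map_div₀, Complex.conj_ofReal] <;>
  · field_simp
    rw [sq, sqrt2_sq] <;> norm_num

lemma pairSum_pauli_one (μ : Fin 3) (pp qq : Fin 2) : pairSum pp qq (pauli μ) 1 = 0 := by
  fin_cases μ <;> fin_cases pp <;> fin_cases qq <;>
    simp [pairSum, bell, pauli, σx, σy, σz, Fintype.sum_prod_type, Fin.sum_univ_two,
      Matrix.one_apply, Prod.ext_iff, map_div₀, Complex.conj_ofReal] <;>
  ring

lemma pairSum_one_pauli (μ : Fin 3) (pp qq : Fin 2) : pairSum pp qq 1 (pauli μ) = 0 := by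
  fin_cases μ <;> fin_cases pp <;> fin_cases qq <;>
    simp [pairSum, bell, pauli, σx, σy, σz, Fintype.sum_prod_type, Fin.sum_univ_two,
      Matrix.one_apply, Prod.ext_iff, map_div₀, Complex.conj_ofReal] <;>
  ring

/-- Sites of the cycle of length `N = 2M` organized as `M` antipodal pairs. -/
def se (N M : ℕ) [NeZero N] (hN : N = 2 * M) : Fin M × Fin 2 ≃ ZMod N where
  toFun x := (((x.1 : ℕ) + M * (x.2 : ℕ) : ℕ) : ZMod N)
  invFun a := (⟨a.val % M, Nat.mod_lt _ (by have := NeZero.ne N; omega)⟩,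
    ⟨a.val / M, by
      have hM : 0 < M := by have := NeZero.ne N; omega
      have := ZMod.val_lt a
      exact (Nat.div_lt_iff_lt_mul hM).2 (by omega)⟩)
  left_inv := by
    rintro ⟨j, k⟩
    have hM : 0 < M := by have := NeZero.ne N; omega
    have hlt : (j : ℕ) + M * (k : ℕ) < N := by
      have h1 : M * (k : ℕ) ≤ M * 1 := Nat.mul_le_mul_left M (by omega)
      have := j.isLt; omega
    have hv : (((j : ℕ) + M * (k : ℕ) : ℕ) : ZMod N).val = (j : ℕ) + M * (k : ℕ) :=
      ZMod.val_natCast_of_lt hlt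
    ext
    · simp only [hv]
      rw [Nat.add_mul_mod_self_left, Nat.mod_eq_of_lt j.isLt]
    · simp only [hv]
      rw [Nat.add_mul_div_left _ _ hM, Nat.div_eq_of_lt j.isLt, Nat.zero_add]
  right_inv := by
    intro a
    simp only []
    rw [Nat.mod_add_div]
    exact ZMod.natCast_rightInverse a

lemma se_zero (N M : ℕ) [NeZero N] (hN : N = 2 * M) (j : Fin M) :
    se N M hN (j, 0) = ((j : ℕ) : ZMod N) := by
  simp [se]

lemma se_one (N M : ℕ) [NeZero N] (hN : N = 2 * M) (j : Fin M) :
    se N M hN (j, 1) = ((j : ℕ) : ZMod N) + (M : ZMod N) := by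
  show (((j : ℕ) + M * ((1 : Fin 2) : ℕ) : ℕ) : ZMod N) = _
  simp [Fin.val_one]

/-- Configurations on the cycle as pairs of spins over the `M` antipodal pairs. -/
def cfgEquiv (N M : ℕ) [NeZero N] (hN : N = 2 * M) : Cfg N ≃ (Fin M → Fin 2 × Fin 2) where
  toFun c := fun j => (c (se N M hN (j, 0)), c (se N M hN (j, 1)))
  invFun g := fun a => if ((se N M hN).symm a).2 = 0 then (g ((se N M hN).symm a).1).1
    else (g ((se N M hN).symm a).1).2
  left_inv := by
    intro c; funext a
    obtain ⟨⟨j, k⟩, rfl⟩ := (se N M hN).surjective a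
    simp only [Equiv.symm_apply_apply]
    fin_cases k <;> simp
  right_inv := by
    intro g; funext j
    refine Prod.ext ?_ ?_ <;> simp [Equiv.symm_apply_apply]

lemma key (N M : ℕ) [NeZero N] (hN : N = 2 * M) (p q : ZMod N → Fin 2)
    (m : ZMod N → Matrix (Fin 2) (Fin 2) ℂ) :
    ∑ c : Cfg N, ∑ c' : Cfg N,
      (starRingEnd ℂ) (eapState N M p q c) * (∏ i : ZMod N, m i (c i) (c' i)) *
        eapState N M p q c'
    = ∏ j : Fin M, pairSum (p ((j : ℕ) : ZMod N)) (q ((j : ℕ) : ZMod N))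
        (m ((j : ℕ) : ZMod N)) (m (((j : ℕ) : ZMod N) + (M : ZMod N))) := by
  set E := cfgEquiv N M hN with hE
  set F : Fin M → (Fin 2 × Fin 2) → (Fin 2 × Fin 2) → ℂ := fun j t t' =>
    (starRingEnd ℂ) (bell (p ((j : ℕ) : ZMod N)) (q ((j : ℕ) : ZMod N)) t) *
      (m ((j : ℕ) : ZMod N) t.1 t'.1 *
        m (((j : ℕ) : ZMod N) + (M : ZMod N)) t.2 t'.2) *
      bell (p ((j : ℕ) : ZMod N)) (q ((j : ℕ) : ZMod N)) t' with hF
  have hv : ∀ c : Cfg N, eapState N M p q c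
      = ∏ j : Fin M, bell (p ((j : ℕ) : ZMod N)) (q ((j : ℕ) : ZMod N)) (E c j) := by
    intro c
    rw [eapState,
      ← Fin.prod_univ_eq_prod_range
        (fun j : ℕ => bell (p (j : ZMod N)) (q (j : ZMod N))
          (c (j : ZMod N), c ((j : ZMod N) + (M : ZMod N)))) M]
    exact Finset.prod_congr rfl fun j _ => by
      simp [hE, cfgEquiv, se_zero, se_one]
  have hm : ∀ c c' : Cfg N, (∏ i : ZMod N, m i (c i) (c' i))
      = ∏ j : Fin M, (m ((j : ℕ) : ZMod N) (E c j).1 (E c' j).1 *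
          m (((j : ℕ) : ZMod N) + (M : ZMod N)) (E c j).2 (E c' j).2) := by
    intro c c'
    rw [← Equiv.prod_comp (se N M hN) (fun i => m i (c i) (c' i)), Fintype.prod_prod_type]
    exact Finset.prod_congr rfl fun j _ => by
      simp [Fin.prod_univ_two, hE, cfgEquiv, se_zero, se_one]
  have step1 : ∑ c : Cfg N, ∑ c' : Cfg N,
      (starRingEnd ℂ) (eapState N M p q c) * (∏ i : ZMod N, m i (c i) (c' i)) *
        eapState N M p q c'
      = ∑ c : Cfg N, ∑ c' : Cfg N, ∏ j : Fin M, F j (E c j) (E c' j) := by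
    refine Finset.sum_congr rfl fun c _ => Finset.sum_congr rfl fun c' _ => ?_
    rw [hv, hv, hm, map_prod, ← Finset.prod_mul_distrib, ← Finset.prod_mul_distrib]
  rw [step1]
  have step2 : ∑ c : Cfg N, ∑ c' : Cfg N, ∏ j : Fin M, F j (E c j) (E c' j)
      = ∑ g : Fin M → Fin 2 × Fin 2, ∑ g' : Fin M → Fin 2 × Fin 2,
          ∏ j : Fin M, F j (g j) (g' j) := by
    rw [← Equiv.sum_comp E (fun g => ∑ g' : Fin M → Fin 2 × Fin 2, ∏ j, F j (g j) (g' j))]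
    exact Finset.sum_congr rfl fun c _ =>
      Equiv.sum_comp E (fun g' => ∏ j, F j (E c j) (g' j))
  rw [step2]
  have step3 : ∀ g : Fin M → Fin 2 × Fin 2,
      ∑ g' : Fin M → Fin 2 × Fin 2, ∏ j : Fin M, F j (g j) (g' j)
      = ∏ j : Fin M, ∑ t' : Fin 2 × Fin 2, F j (g j) t' := by
    intro g
    rw [Finset.prod_univ_sum fun _ => (univ : Finset (Fin 2 × Fin 2))]
    rw [Fintype.piFinset_univ]
  simp only [step3]
  have step4 : (∏ j : Fin M, ∑ t : Fin 2 × Fin 2, ∑ t' : Fin 2 × Fin 2, F j t t')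
      = ∑ x : Fin M → Fin 2 × Fin 2, ∏ j : Fin M, ∑ t' : Fin 2 × Fin 2, F j (x j) t' := by
    rw [Finset.prod_univ_sum fun _ => (univ : Finset (Fin 2 × Fin 2)), Fintype.piFinset_univ]
  rw [← step4]
  rfl

lemma pauliString_eq_prod (N : ℕ) [NeZero N] (X : Finset (ZMod N)) (μ : ZMod N → Fin 3)
    (c c' : Cfg N) :
    pauliString N X μ c c'
      = ∏ i : ZMod N, (if i ∈ X then pauli (μ i) else 1) (c i) (c' i) := by
  rw [← Finset.prod_mul_prod_compl X
    (fun i => (if i ∈ X then pauli (μ i) else 1) (c i) (c' i))]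
  show (∏ j ∈ X, pauli (μ j) (c j) (c' j)) * (if ∀ i, i ∉ X → c i = c' i then 1 else 0) = _
  congr 1
  · exact Finset.prod_congr rfl fun i hi => by simp [hi]
  · by_cases h : ∀ i, i ∉ X → c i = c' i
    · rw [if_pos h]
      symm
      refine Finset.prod_eq_one fun i hi => ?_
      have hiX := Finset.mem_compl.mp hi
      rw [if_neg hiX]
      simp [Matrix.one_apply, h i hiX]
    · rw [if_neg h]
      symm
      push_neg at h
      obtain ⟨i, hiX, hne⟩ := h
      refine Finset.prod_eq_zero (Finset.mem_compl.mpr hiX) ?_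
      rw [if_neg hiX]
      simp [Matrix.one_apply, hne]

lemma eap_norm_one (N M : ℕ) [NeZero N] (hN : N = 2 * M) (p q : ZMod N → Fin 2) :
    ∑ c : Cfg N, (starRingEnd ℂ) (eapState N M p q c) * eapState N M p q c = 1 := by
  have h2 : ∀ c c' : Cfg N,
      (∏ i : ZMod N, (1 : Matrix (Fin 2) (Fin 2) ℂ) (c i) (c' i))
        = if c = c' then 1 else 0 := by
    intro c c'
    by_cases h : c = c'
    · subst h
      rw [if_pos rfl]
      exact Finset.prod_eq_one fun i _ => by simp [Matrix.one_apply]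
    · rw [if_neg h]
      obtain ⟨i, hne⟩ := Function.ne_iff.mp h
      exact Finset.prod_eq_zero (Finset.mem_univ i) (by simp [Matrix.one_apply, hne])
  have h1 : ∀ c : Cfg N, ∑ c' : Cfg N,
      (starRingEnd ℂ) (eapState N M p q c) *
        (∏ i : ZMod N, (1 : Matrix (Fin 2) (Fin 2) ℂ) (c i) (c' i)) * eapState N M p q c'
      = (starRingEnd ℂ) (eapState N M p q c) * eapState N M p q c := by
    intro c
    simp only [h2, mul_ite, mul_one, mul_zero, ite_mul, zero_mul]
    rw [Finset.sum_ite_eq]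
    simp
  calc ∑ c : Cfg N, (starRingEnd ℂ) (eapState N M p q c) * eapState N M p q c
      = ∑ c : Cfg N, ∑ c' : Cfg N,
          (starRingEnd ℂ) (eapState N M p q c) *
            (∏ i : ZMod N, (1 : Matrix (Fin 2) (Fin 2) ℂ) (c i) (c' i)) *
            eapState N M p q c' := (Finset.sum_congr rfl fun c _ => (h1 c).symm)
    _ = ∏ j : Fin M, pairSum (p ((j : ℕ) : ZMod N)) (q ((j : ℕ) : ZMod N)) 1 1 :=
        key N M hN p q (fun _ => 1)
    _ = 1 := by simp [pairSum_one_one]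

lemma diam_lower (N M : ℕ) [NeZero N] (hN : N = 2 * M) {X : Finset (ZMod N)} {a : ZMod N}
    (ha : a ∈ X) (hb : a + (M : ZMod N) ∈ X) : M ≤ diam N X := by
  have hM : 0 < M := by have := NeZero.ne N; omega
  have hMval : ((M : ℕ) : ZMod N).val = M := ZMod.val_natCast_of_lt (by omega)
  have hMne : (M : ZMod N) ≠ 0 := by
    intro h; rw [h, ZMod.val_zero] at hMval; omega
  have hneg : (-(M : ZMod N)).val = M := by
    rw [ZMod.neg_val, if_neg hMne, hMval]; omega
  have h1 : ((a + (M : ZMod N)) - a : ZMod N) = (M : ZMod N) := by ring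
  have h2 : (a - (a + (M : ZMod N)) : ZMod N) = -(M : ZMod N) := by ring
  have hmin : M = min ((a - (a + (M : ZMod N))).val) (((a + (M : ZMod N)) - a).val) := by
    rw [h1, h2, hMval, hneg]; simp
  calc M = min ((a - (a + (M : ZMod N))).val) (((a + (M : ZMod N)) - a).val) := hmin
    _ ≤ X.sup (fun b => min ((a - b).val) ((b - a).val)) :=
        Finset.le_sup (f := fun b => min ((a - b).val) ((b - a).val)) hb
    _ ≤ diam N X :=
        Finset.le_sup (f := fun a => X.sup fun b => min ((a - b).val) ((b - a).val)) ha

/-- The sesquilinear form `A ↦ ⟨v| A |v⟩` as a linear map in `A`. -/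
def quadForm (N : ℕ) [NeZero N] (v : Cfg N → ℂ) :
    Matrix (Cfg N) (Cfg N) ℂ →ₗ[ℂ] ℂ where
  toFun A := ∑ c : Cfg N, ∑ c' : Cfg N, (starRingEnd ℂ) (v c) * A c c' * v c'
  map_add' A B := by
    simp only [Matrix.add_apply]
    rw [← Finset.sum_add_distrib]
    refine Finset.sum_congr rfl fun c _ => ?_
    rw [← Finset.sum_add_distrib]
    exact Finset.sum_congr rfl fun c' _ => by ring
  map_smul' r A := by
    simp only [Matrix.smul_apply, smul_eq_mul, RingHom.id_apply, Finset.mul_sum]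
    refine Finset.sum_congr rfl fun c _ => Finset.sum_congr rfl fun c' _ => by ring

lemma quadForm_pauliString (N M : ℕ) [NeZero N] (hN : N = 2 * M)
    (p q : ZMod N → Fin 2) (X : Finset (ZMod N)) (μ : ZMod N → Fin 3)
    (hXne : X.Nonempty) (hd : ¬ (N ≤ 4 * diam N X)) :
    quadForm N (eapState N M p q) (pauliString N X μ) = 0 := by
  have hMM : (M : ZMod N) + (M : ZMod N) = 0 := by
    have h : ((2 * M : ℕ) : ZMod N) = 0 := by rw [← hN]; exact ZMod.natCast_self N
    push_cast at h
    linear_combination h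
  have hkey : quadForm N (eapState N M p q) (pauliString N X μ)
      = ∏ j : Fin M, pairSum (p ((j : ℕ) : ZMod N)) (q ((j : ℕ) : ZMod N))
          ((if ((j : ℕ) : ZMod N) ∈ X then pauli (μ ((j : ℕ) : ZMod N)) else 1))
          ((if ((j : ℕ) : ZMod N) + (M : ZMod N) ∈ X
            then pauli (μ (((j : ℕ) : ZMod N) + (M : ZMod N))) else 1)) := by
    rw [show quadForm N (eapState N M p q) (pauliString N X μ)
        = ∑ c : Cfg N, ∑ c' : Cfg N,
            (starRingEnd ℂ) (eapState N M p q c) *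
              (∏ i : ZMod N, (if i ∈ X then pauli (μ i) else 1) (c i) (c' i)) *
              eapState N M p q c' from
      Finset.sum_congr rfl fun c _ => Finset.sum_congr rfl fun c' _ => by
        rw [pauliString_eq_prod]]
    exact key N M hN p q (fun i => if i ∈ X then pauli (μ i) else 1)
  rw [hkey]
  obtain ⟨a, ha⟩ := hXne
  obtain ⟨⟨j, k⟩, rfl⟩ := (se N M hN).surjective a
  have hnb : ¬ (((j : ℕ) : ZMod N) ∈ X ∧ ((j : ℕ) : ZMod N) + (M : ZMod N) ∈ X) := by
    rintro ⟨h0, h1⟩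
    exact hd (by have := diam_lower N M hN h0 h1; omega)
  refine Finset.prod_eq_zero (Finset.mem_univ j) ?_
  fin_cases k
  · have ha' : se N M hN (j, 0) ∈ X := ha
    rw [se_zero] at ha'
    have h1 : ((j : ℕ) : ZMod N) + (M : ZMod N) ∉ X := fun h => hnb ⟨ha', h⟩
    rw [if_pos ha', if_neg h1]
    exact pairSum_pauli_one _ _ _
  · have ha' : se N M hN (j, 1) ∈ X := ha
    rw [se_one] at ha'
    have h0 : ((j : ℕ) : ZMod N) ∉ X := fun h => hnb ⟨h, ha'⟩
    rw [if_neg h0, if_pos ha']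
    exact pairSum_one_pauli _ _ _

end EAPProof

/-- If an EAP state is an eigenvector of the (traceless, `D(X) < N/4`-local)
Hamiltonian `H`, then its eigenvalue is `0`. -/
theorem eap_eigenvalue_zero (N M : ℕ) [NeZero N] (hN : N = 2 * M)
    (p q : ZMod N → Fin 2)
    (hp : ∀ j : ZMod N, p (j + (M : ZMod N)) = p j)
    (hq : ∀ j : ZMod N, q (j + (M : ZMod N)) = q j)
    (J : Finset (ZMod N) → (ZMod N → Fin 3) → ℝ)
    (hloc : ∀ X μ, N ≤ 4 * diam N X → J X μ = 0)
    (htr : ∀ μ, J ∅ μ = 0)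
    (lam : ℂ)
    (heig : (ham N J).mulVec (eapState N M p q) = lam • eapState N M p q) :
    lam = 0 := by
  classical
  open EAPProof in
  have hS1 : EAPProof.quadForm N (eapState N M p q) (ham N J) = lam := by
    have hmv : ∀ c : Cfg N,
        ∑ c' : Cfg N, (starRingEnd ℂ) (eapState N M p q c) * (ham N J) c c' *
          eapState N M p q c'
        = (starRingEnd ℂ) (eapState N M p q c) * ((ham N J).mulVec (eapState N M p q)) c := by
      intro c
      simp only [Matrix.mulVec, dotProduct, Finset.mul_sum]
      exact Finset.sum_congr rfl fun c' _ => by ring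
    have : EAPProof.quadForm N (eapState N M p q) (ham N J)
        = ∑ c : Cfg N, (starRingEnd ℂ) (eapState N M p q c) *
            ((ham N J).mulVec (eapState N M p q)) c :=
      Finset.sum_congr rfl fun c _ => hmv c
    rw [this, heig]
    simp only [Pi.smul_apply, smul_eq_mul]
    rw [show ∑ c : Cfg N, (starRingEnd ℂ) (eapState N M p q c) * (lam * eapState N M p q c)
        = lam * ∑ c : Cfg N, (starRingEnd ℂ) (eapState N M p q c) * eapState N M p q c from by
      rw [Finset.mul_sum]; exact Finset.sum_congr rfl fun c _ => by ring]
    rw [EAPProof.eap_norm_one N M hN p q, mul_one]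
  have hS0 : EAPProof.quadForm N (eapState N M p q) (ham N J) = 0 := by
    rw [ham]
    rw [map_sum]
    refine Finset.sum_eq_zero fun X _ => ?_
    rw [map_sum]
    refine Finset.sum_eq_zero fun μ _ => ?_
    rw [_root_.map_smul, smul_eq_mul]
    rcases eq_or_ne X ∅ with rfl | hXne
    · rw [htr μ]; simp
    by_cases hd : N ≤ 4 * diam N X
    · rw [hloc X μ hd]; simp
    · rw [EAPProof.quadForm_pauliString N M hN p q X μ
        (Finset.nonempty_of_ne_empty hXne) hd, mul_zero]
  rw [← hS1, hS0]
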